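/- Let P be a 3-CNF propositional formula with k ≥ 1 clauses over variables x_1,…,x_l, and let 𝒯_P be the associated tree ensemble on ℝ^l. Then the single-leaf decision tree labeled with class 0 is faithful to 𝒯_P on ℝ^l if and only if P is unsatisfiable; equivalently, the minimum depth of a decision tree faithful to 𝒯_P on ℝ^l equals 0 if P is unsatisfiable, and is at least 1 if P is satisfiable. -/

import Mathlib

/-- A decision tree on `ℝ^p`: either a leaf labeled with a class `c : ℕ`,
or an internal node splitting on feature `j` with threshold `t`. -/
inductive DTree (p : ℕ) : Type where
  | leaf (c : ℕ) : DTree p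
  | node (j : Fin p) (t : ℝ) (L R : DTree p) : DTree p

namespace DTree

/-- Evaluation of a decision tree at a point `x : ℝ^p`. -/
noncomputable def eval {p : ℕ} : DTree p → (Fin p → ℝ) → ℕ
  | leaf c, _ => c
  | node j t L R, x => if x j ≤ t then L.eval x else R.eval x

/-- Depth `Φ(T)` of a decision tree. -/
def depth {p : ℕ} : DTree p → ℕ
  | leaf _ => 0
  | node _ _ L R => 1 + max L.depth R.depth

/-- Number of leaves `L(T)` of a decision tree. -/
def leaves {p : ℕ} : DTree p → ℕ
  | leaf _ => 1
  | node _ _ L R => L.leaves + R.leaves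

/-- The set of splits `(j, t)` occurring at internal nodes of a tree. -/
def splits {p : ℕ} : DTree p → Set (Fin p × ℝ)
  | leaf _ => ∅
  | node j t L R => insert (j, t) (L.splits ∪ R.splits)

end DTree

/-- A tree ensemble: a finite nonempty family of decision trees with positive weights. -/
structure Ensemble (p : ℕ) : Type where
  m : ℕ
  m_pos : 0 < m
  tree : Fin m → DTree p
  weight : Fin m → ℝ
  weight_pos : ∀ i, 0 < weight i

namespace Ensemble

/-- Total weight of the trees voting for class `c` at point `x`. -/
noncomputable def score {p : ℕ} (E : Ensemble p) (x : Fin p → ℝ) (c : ℕ) : ℝ :=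
  ∑ i ∈ Finset.univ.filter (fun i => (E.tree i).eval x = c), E.weight i

/-- The decision function of the ensemble: the smallest class maximizing the weighted vote. -/
noncomputable def F {p : ℕ} (E : Ensemble p) (x : Fin p → ℝ) : ℕ :=
  sInf {c : ℕ | ∀ c' : ℕ, E.score x c' ≤ E.score x c}

/-- The set `H j` of thresholds appearing in splits on feature `j` in trees of the ensemble. -/
def H {p : ℕ} (E : Ensemble p) (j : Fin p) : Set ℝ :=
  {t : ℝ | ∃ i, (j, t) ∈ (E.tree i).splits}

end Ensemble

/-- `T` is faithful to the ensemble `E` on the set `S`. -/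
def Faithful {p : ℕ} (T : DTree p) (E : Ensemble p) (S : Set (Fin p → ℝ)) : Prop :=
  ∀ x ∈ S, T.eval x = E.F x

/-- A 3-clause over boolean variables indexed by `Fin l`: three literals on three distinct
variables, each literal given by a variable `var i` and a polarity `sign i`
(`true` for a positive literal). -/
structure Clause (l : ℕ) : Type where
  var : Fin 3 → Fin l
  var_inj : Function.Injective var
  sign : Fin 3 → Bool

/-- A boolean assignment `ν` satisfies the clause iff some literal is satisfied. -/
def Clause.sat {l : ℕ} (C : Clause l) (ν : Fin l → Bool) : Prop :=
  ∃ i : Fin 3, ν (C.var i) = C.sign i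

/-- The assignment `ν_x` encoded by `x ∈ ℝ^l` (`ν_x(i) = true` iff `x i > 1/2`) satisfies
the clause. -/
def Clause.satAt {l : ℕ} (C : Clause l) (x : Fin l → ℝ) : Prop :=
  ∃ i : Fin 3, (C.sign i = true ↔ 1 / 2 < x (C.var i))

/-- A 3-CNF formula with `k ≥ 1` clauses over variables indexed by `Fin l`. -/
structure CNF (l : ℕ) : Type where
  k : ℕ
  k_pos : 0 < k
  clause : Fin k → Clause l

/-- A boolean assignment satisfies the formula iff it satisfies every clause. -/
def CNF.sat {l : ℕ} (P : CNF l) (ν : Fin l → Bool) : Prop :=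
  ∀ i, (P.clause i).sat ν

/-- The assignment `ν_x` encoded by `x ∈ ℝ^l` satisfies the formula. -/
def CNF.satAt {l : ℕ} (P : CNF l) (x : Fin l → ℝ) : Prop :=
  ∀ i, (P.clause i).satAt x

/-- Leaf of the clause tree corresponding to the assignment `a` of the three clause
variables: class `1` (True) unless `a` falsifies the clause, in which case class `0`. -/
def litLeaf {l : ℕ} (C : Clause l) (a : Fin 3 → Bool) : DTree l :=
  DTree.leaf (if ∃ i : Fin 3, a i = C.sign i then 1 else 0)

/-- The complete depth-3 decision tree of a clause: it splits successively on the three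
variables of the clause, each with threshold `1/2` (left = False, right = True); its eight
leaves are labeled `1` except the unique leaf corresponding to the falsifying assignment,
which is labeled `0`. -/
noncomputable def clauseTree {l : ℕ} (C : Clause l) : DTree l :=
  DTree.node (C.var 0) (1 / 2)
    (DTree.node (C.var 1) (1 / 2)
      (DTree.node (C.var 2) (1 / 2)
        (litLeaf C ![false, false, false]) (litLeaf C ![false, false, true]))
      (DTree.node (C.var 2) (1 / 2)
        (litLeaf C ![false, true, false]) (litLeaf C ![false, true, true])))
    (DTree.node (C.var 1) (1 / 2)
      (DTree.node (C.var 2) (1 / 2)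
        (litLeaf C ![true, false, false]) (litLeaf C ![true, false, true]))
      (DTree.node (C.var 2) (1 / 2)
        (litLeaf C ![true, true, false]) (litLeaf C ![true, true, true])))

/-- The tree ensemble `𝒯_P` associated with a 3-CNF formula `P` with `k` clauses:
`2k − 1` unit-weight trees, namely the `k` clause trees together with `k − 1` single-leaf
trees of class `0` (False). -/
noncomputable def cnfEnsemble {l : ℕ} (P : CNF l) : Ensemble l where
  m := 2 * P.k - 1
  m_pos := by have := P.k_pos; omega
  tree := fun i =>
    if h : (i : ℕ) < P.k then clauseTree (P.clause ⟨i, h⟩) else DTree.leaf 0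
  weight := fun _ => 1
  weight_pos := fun _ => one_pos

open Finset

open Classical in
lemma clauseTree_eval {l : ℕ} (C : Clause l) (x : Fin l → ℝ) :
    (clauseTree C).eval x = if C.satAt x then 1 else 0 := by
  have key : ∀ a : Fin 3 → Bool, (∀ i, (a i = true ↔ 1/2 < x (C.var i))) →
      (litLeaf C a).eval x = if C.satAt x then 1 else 0 := by
    intro a ha
    have h : (∃ i, a i = C.sign i) ↔ C.satAt x := by
      apply exists_congr; intro i
      rw [Bool.eq_iff_iff, ha i]
      exact Iff.comm
    classical simp only [litLeaf, DTree.eval, h]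
  simp only [clauseTree, DTree.eval]
  by_cases h0 : x (C.var 0) ≤ 1/2 <;> by_cases h1 : x (C.var 1) ≤ 1/2 <;>
      by_cases h2 : x (C.var 2) ≤ 1/2 <;>
    simp only [h0, h1, h2, if_true, if_false, ite_true, ite_false] <;>
    (refine key _ ?_; intro i; fin_cases i <;> simp [← not_le] <;> linarith)

lemma card_filter_lt {m n : ℕ} (h : n ≤ m) :
    (univ.filter fun i : Fin m => (i : ℕ) < n).card = n := by
  have : (univ.filter fun i : Fin m => (i : ℕ) < n)
      = Finset.map (Fin.castLEEmb h) univ := by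
    ext i
    simp only [mem_filter, mem_univ, true_and, mem_map, Fin.castLEEmb, Fin.castLE,
      Function.Embedding.coeFn_mk]
    constructor
    · intro hi; exact ⟨⟨i, hi⟩, rfl⟩
    · rintro ⟨a, rfl⟩; exact a.isLt
  rw [this, Finset.card_map, card_univ, Fintype.card_fin]

lemma score_eq_card {l : ℕ} (P : CNF l) (x : Fin l → ℝ) (c : ℕ) :
    (cnfEnsemble P).score x c =
      ((univ.filter fun i : Fin (2 * P.k - 1) =>
        ((cnfEnsemble P).tree i).eval x = c).card : ℝ) := by
  simp [Ensemble.score, cnfEnsemble]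
  congr 1

open Classical in
lemma tree_eval {l : ℕ} (P : CNF l) (x : Fin l → ℝ) (i : Fin (2 * P.k - 1)) :
    ((cnfEnsemble P).tree i).eval x =
      if h : (i : ℕ) < P.k then (if (P.clause ⟨i, h⟩).satAt x then 1 else 0) else 0 := by
  classical
  by_cases h : (i : ℕ) < P.k <;>
    simp [cnfEnsemble, h, clauseTree_eval, DTree.eval]

open Classical in
lemma F_eq {l : ℕ} (P : CNF l) (x : Fin l → ℝ) :
    (cnfEnsemble P).F x = if P.satAt x then 1 else 0 := by
  classical
  have hk1 : 1 ≤ P.k := P.k_pos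
  have hkm : P.k ≤ 2 * P.k - 1 := by omega
  have hzero : ∀ c : ℕ, 2 ≤ c → (cnfEnsemble P).score x c = 0 := by
    intro c hc
    rw [score_eq_card]
    norm_cast
    rw [Finset.card_eq_zero, Finset.filter_eq_empty_iff]
    intro i _
    rw [tree_eval]
    split_ifs <;> omega
  have hnonneg : ∀ c : ℕ, 0 ≤ (cnfEnsemble P).score x c := by
    intro c; rw [score_eq_card]; positivity
  by_cases hs : P.satAt x
  · rw [if_pos hs]
    have h1 : (cnfEnsemble P).score x 1 = (P.k : ℝ) := by
      rw [score_eq_card]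
      norm_cast
      rw [show (univ.filter fun i : Fin (2 * P.k - 1) =>
          ((cnfEnsemble P).tree i).eval x = 1)
          = univ.filter fun i : Fin (2 * P.k - 1) => (i : ℕ) < P.k from ?_,
        card_filter_lt hkm]
      ext i
      simp only [mem_filter, mem_univ, true_and, tree_eval]
      by_cases h : (i : ℕ) < P.k
      · rw [dif_pos h, if_pos (hs _)]; simp [h]
      · rw [dif_neg h]; simp [h]
    have h0 : (cnfEnsemble P).score x 0 = ((P.k : ℝ)) - 1 := by
      rw [score_eq_card]
      have : (univ.filter fun i : Fin (2 * P.k - 1) =>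
          ((cnfEnsemble P).tree i).eval x = 0)
          = univ.filter fun i : Fin (2 * P.k - 1) => ¬ ((i : ℕ) < P.k) := by
        ext i
        simp only [mem_filter, mem_univ, true_and, tree_eval]
        by_cases h : (i : ℕ) < P.k
        · rw [dif_pos h, if_pos (hs _)]; simp [h]
        · rw [dif_neg h]; simp [h]
      rw [this, Finset.filter_not, Finset.card_sdiff_of_subset (Finset.filter_subset _ _),
        card_filter_lt hkm, card_univ, Fintype.card_fin]
      have : 2 * P.k - 1 - P.k = P.k - 1 := by omega
      rw [this]
      push_cast [hk1]
      ring
    have hmem : ∀ c', (cnfEnsemble P).score x c' ≤ (cnfEnsemble P).score x 1 := by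
      intro c'
      match c' with
      | 0 => rw [h0, h1]; linarith
      | 1 => exact le_refl _
      | (n+2) => rw [hzero (n+2) (by omega), h1]; positivity
    apply le_antisymm
    · exact Nat.sInf_le hmem
    · have h1mem : (1 : ℕ) ∈ {c : ℕ | ∀ c' : ℕ,
          (cnfEnsemble P).score x c' ≤ (cnfEnsemble P).score x c} := hmem
      apply le_csInf ⟨1, h1mem⟩
      intro c hc
      rcases Nat.eq_zero_or_pos c with rfl | h
      · exfalso
        have := hc 1
        rw [h0, h1] at this
        linarith
      · exact h
  · rw [if_neg hs]
    rw [CNF.satAt] at hs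
    push_neg at hs
    obtain ⟨i0, hi0⟩ := hs
    set i0' : Fin (2 * P.k - 1) := ⟨i0, lt_of_lt_of_le i0.isLt hkm⟩ with hi0'
    have hev0 : ((cnfEnsemble P).tree i0').eval x = 0 := by
      rw [tree_eval, dif_pos (show ((i0' : ℕ) < P.k) from i0.isLt)]
      exact if_neg hi0
    have h0 : (P.k : ℝ) ≤ (cnfEnsemble P).score x 0 := by
      rw [score_eq_card]
      norm_cast
      have hsub : insert i0' (univ.filter fun i : Fin (2 * P.k - 1) => ¬ ((i : ℕ) < P.k))
          ⊆ univ.filter fun i : Fin (2 * P.k - 1) =>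
            ((cnfEnsemble P).tree i).eval x = 0 := by
        intro i hi
        rw [Finset.mem_insert] at hi
        simp only [mem_filter, mem_univ, true_and, tree_eval]
        rcases hi with rfl | hi
        · rw [← tree_eval]; exact hev0
        · rw [dif_neg (by simpa using hi)]
      calc P.k = (univ.filter fun i : Fin (2 * P.k - 1) => ¬ ((i : ℕ) < P.k)).card + 1 := by
              rw [Finset.filter_not, Finset.card_sdiff_of_subset (Finset.filter_subset _ _),
                card_filter_lt hkm, card_univ, Fintype.card_fin]
              omega
        _ = (insert i0' (univ.filter fun i : Fin (2 * P.k - 1) => ¬ ((i : ℕ) < P.k))).card := by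
              exact (Finset.card_insert_of_notMem (by simp [hi0', i0.isLt])).symm
        _ ≤ _ := Finset.card_le_card hsub
    have h1 : (cnfEnsemble P).score x 1 ≤ (P.k : ℝ) - 1 := by
      rw [score_eq_card]
      have hsub : (univ.filter fun i : Fin (2 * P.k - 1) =>
            ((cnfEnsemble P).tree i).eval x = 1)
          ⊆ (univ.filter fun i : Fin (2 * P.k - 1) => (i : ℕ) < P.k).erase i0' := by
        intro i hi
        simp only [mem_filter, mem_univ, true_and, tree_eval] at hi
        rw [Finset.mem_erase]
        by_cases h : (i : ℕ) < P.k
        · refine ⟨?_, by simp [h]⟩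
          rintro rfl
          rw [← tree_eval, hev0] at hi
          omega
        · rw [dif_neg h] at hi; omega
      have := Finset.card_le_card hsub
      have hcard : ((univ.filter fun i : Fin (2 * P.k - 1) => (i : ℕ) < P.k).erase i0').card
          = P.k - 1 := by
        rw [Finset.card_erase_of_mem (by simp [hi0', i0.isLt]), card_filter_lt hkm]
      rw [hcard] at this
      calc ((univ.filter fun i : Fin (2 * P.k - 1) =>
            ((cnfEnsemble P).tree i).eval x = 1).card : ℝ)
          ≤ ((P.k - 1 : ℕ) : ℝ) := by exact_mod_cast this
        _ = (P.k : ℝ) - 1 := by push_cast [hk1]; ring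
    have hmem : ∀ c', (cnfEnsemble P).score x c' ≤ (cnfEnsemble P).score x 0 := by
      intro c'
      match c' with
      | 0 => exact le_refl _
      | 1 => linarith
      | (n+2) => rw [hzero (n+2) (by omega)]; linarith [hnonneg 0]
    exact Nat.sInf_eq_zero.mpr (Or.inl hmem)

lemma satAt_iff_sat {l : ℕ} (P : CNF l) (x : Fin l → ℝ) :
    P.satAt x ↔ P.sat (fun i => decide (1 / 2 < x i)) := by
  apply forall_congr'; intro i
  apply exists_congr; intro j
  cases hsj : (P.clause i).sign j <;> simp [hsj]

lemma satAt_xOf {l : ℕ} (P : CNF l) (ν : Fin l → Bool) :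
    P.satAt (fun i => if ν i then 1 else 0) ↔ P.sat ν := by
  rw [satAt_iff_sat]
  have : (fun i => decide ((1:ℝ) / 2 < if ν i then 1 else 0)) = ν := by
    funext i; cases hv : ν i <;> simp [hv] <;> norm_num
  rw [this]

lemma exists_unsat_assignment {l : ℕ} (C : Clause l) : ∃ μ : Fin l → Bool, ¬ C.sat μ := by
  classical
  refine ⟨fun j => if h : ∃ i, C.var i = j then ! C.sign h.choose else false, ?_⟩
  rintro ⟨i, hi⟩
  have he : ∃ i', C.var i' = C.var i := ⟨i, rfl⟩
  beta_reduce at hi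
  rw [dif_pos he] at hi
  have : he.choose = i := C.var_inj he.choose_spec
  rw [this] at hi
  simp at hi

noncomputable def buildTree {l : ℕ} (f : (Fin l → Bool) → ℕ) :
    (n : ℕ) → n ≤ l → (Fin l → Bool) → DTree l
  | 0, _, a => DTree.leaf (f a)
  | n+1, h, a => DTree.node ⟨n, h⟩ (1/2)
      (buildTree f n (Nat.le_of_succ_le h) (Function.update a ⟨n, h⟩ false))
      (buildTree f n (Nat.le_of_succ_le h) (Function.update a ⟨n, h⟩ true))

lemma buildTree_eval {l : ℕ} (f : (Fin l → Bool) → ℕ) (x : Fin l → ℝ) :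
    ∀ (n : ℕ) (h : n ≤ l) (a : Fin l → Bool),
    (buildTree f n h a).eval x
      = f (fun i => if (i : ℕ) < n then decide (1 / 2 < x i) else a i) := by
  intro n
  induction n with
  | zero =>
    intro h a
    simp only [buildTree, DTree.eval]
    congr 1
  | succ n ih =>
    intro h a
    simp only [buildTree, DTree.eval]
    by_cases hx : x ⟨n, h⟩ ≤ 1/2
    · rw [if_pos hx, ih]
      congr 1; funext i
      by_cases h1 : (i : ℕ) < n
      · simp [h1, Nat.lt_succ_of_lt h1]
      · by_cases h2 : (i : ℕ) = n
        · have hie : i = ⟨n, h⟩ := Fin.ext h2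
          subst hie
          simp only [h1, if_false, Function.update_self, if_pos (Nat.lt_succ_self n)]
          have hxx : ¬ ((1:ℝ)/2 < x ⟨n, h⟩) := not_lt.mpr hx
          simp [hxx]
          linarith
        · have hne : i ≠ ⟨n, h⟩ := fun e => h2 (by rw [e])
          have h3 : ¬ (i : ℕ) < n + 1 := by omega
          simp [h1, h3, Function.update_of_ne hne]
    · rw [if_neg hx, ih]
      congr 1; funext i
      by_cases h1 : (i : ℕ) < n
      · simp [h1, Nat.lt_succ_of_lt h1]
      · by_cases h2 : (i : ℕ) = n
        · have hie : i = ⟨n, h⟩ := Fin.ext h2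
          subst hie
          simp only [h1, if_false, Function.update_self, if_pos (Nat.lt_succ_self n)]
          have hxx : (1:ℝ)/2 < x ⟨n, h⟩ := lt_of_not_ge hx
          simp [hxx]
          linarith
        · have hne : i ≠ ⟨n, h⟩ := fun e => h2 (by rw [e])
          have h3 : ¬ (i : ℕ) < n + 1 := by omega
          simp [h1, h3, Function.update_of_ne hne]

open Classical in
lemma exists_faithful {l : ℕ} (P : CNF l) :
    ∃ T : DTree l, Faithful T (cnfEnsemble P) Set.univ := by
  classical
  refine ⟨buildTree (fun μ => if P.sat μ then 1 else 0) l le_rfl (fun _ => false), ?_⟩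
  intro x _
  rw [buildTree_eval, F_eq]
  have h : (fun i : Fin l => if (i : ℕ) < l then decide (1 / 2 < x i) else false)
      = fun i => decide (1 / 2 < x i) := by
    funext i; rw [if_pos i.isLt]
  rw [h, satAt_iff_sat]

/-- The single-leaf tree of class `0` is faithful to `𝒯_P` on `ℝ^l` iff `P`
is unsatisfiable; equivalently, the minimum depth of a decision tree faithful to `𝒯_P` on
`ℝ^l` equals `0` if `P` is unsatisfiable and is at least `1` if `P` is satisfiable. -/
theorem cnf_born_again_reduction {l : ℕ} (P : CNF l) :
    (Faithful (DTree.leaf 0) (cnfEnsemble P) Set.univ ↔ ¬ ∃ ν : Fin l → Bool, P.sat ν) ∧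
    ((¬ ∃ ν : Fin l → Bool, P.sat ν) →
      sInf {d : ℕ | ∃ T : DTree l, Faithful T (cnfEnsemble P) Set.univ ∧ T.depth = d} = 0) ∧
    ((∃ ν : Fin l → Bool, P.sat ν) →
      1 ≤ sInf {d : ℕ | ∃ T : DTree l, Faithful T (cnfEnsemble P) Set.univ ∧ T.depth = d}) := by
    classical
  have hiff : Faithful (DTree.leaf 0) (cnfEnsemble P) Set.univ ↔
      ¬ ∃ ν : Fin l → Bool, P.sat ν := by
    constructor
    · rintro hf ⟨ν, hν⟩
      have h := hf (fun i => if ν i then 1 else 0) trivial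
      rw [F_eq, if_pos ((satAt_xOf P ν).mpr hν)] at h
      simp [DTree.eval] at h
    · intro hns x _
      rw [F_eq, if_neg]
      · rfl
      · intro hsat
        exact hns ⟨_, (satAt_iff_sat P x).mp hsat⟩
  refine ⟨hiff, ?_, ?_⟩
  · intro hns
    exact Nat.sInf_eq_zero.mpr (Or.inl ⟨DTree.leaf 0, hiff.mpr hns, rfl⟩)
  · rintro ⟨ν, hν⟩
    obtain ⟨T0, hT0⟩ := exists_faithful P
    have hne : {d : ℕ | ∃ T : DTree l,
        Faithful T (cnfEnsemble P) Set.univ ∧ T.depth = d}.Nonempty :=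
      ⟨T0.depth, T0, hT0, rfl⟩
    have h0notin : 0 ∉ {d : ℕ | ∃ T : DTree l,
        Faithful T (cnfEnsemble P) Set.univ ∧ T.depth = d} := by
      rintro ⟨T, hT, hd⟩
      cases T with
      | node j t L R => simp [DTree.depth] at hd
      | leaf c =>
        have h1 := hT (fun i => if ν i then 1 else 0) trivial
        rw [F_eq, if_pos ((satAt_xOf P ν).mpr hν)] at h1
        obtain ⟨μ, hμ⟩ := exists_unsat_assignment (P.clause ⟨0, P.k_pos⟩)
        have h2 := hT (fun i => if μ i then 1 else 0) trivial
        rw [F_eq, if_neg] at h2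
        · simp only [DTree.eval] at h1 h2
          omega
        · intro hsat
          exact hμ (((satAt_xOf P μ).mp hsat) ⟨0, P.k_pos⟩)
    rcases Nat.eq_zero_or_pos (sInf {d : ℕ | ∃ T : DTree l,
        Faithful T (cnfEnsemble P) Set.univ ∧ T.depth = d}) with h | h
    · exfalso
      rcases Nat.sInf_eq_zero.mp h with h0 | hemp
      · exact h0notin h0
      · exact hne.ne_empty hemp
    · exact h
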